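/- Suppose (s̃,ã) has support disjoint from (s_t,a_t), i.e., no state s' has both P(s'|s̃,ã) > 0 and P(s'|s_t,a_t) > 0. If P(s̃'|s̃,ã) < P(s_{t+1}|s_t,a_t), then there exists a probability vector θ consistent with P such that the counterfactual probability P̃(s̃'|s̃,ã) equals P(s̃'|s̃,ã) / P(s_{t+1}|s_t,a_t), and this value is the maximum over all consistent θ. -/
import Mathlib

open Finset

section Helpers

variable {S : Type*} [Fintype S] [DecidableEq S]

/-- marginal of a product measure on a function space -/
lemma prod_marginal {ι : Type*} [Fintype ι] [DecidableEq ι]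
    (p : ι → S → ℝ) (hsum : ∀ i, ∑ x, p i x = 1) (i0 : ι) (s' : S) :
    ∑ g ∈ Finset.univ.filter (fun g : ι → S => g i0 = s'), ∏ i, p i (g i) = p i0 s' := by
  have h := Finset.prod_univ_sum (fun i => if i = i0 then ({s'} : Finset S) else Finset.univ)
    (fun i j => p i j)
  have hset : Fintype.piFinset (fun i => if i = i0 then ({s'} : Finset S) else Finset.univ)
      = Finset.univ.filter (fun g : ι → S => g i0 = s') := by
    ext g
    simp only [Fintype.mem_piFinset, mem_filter, mem_univ, true_and]
    constructor
    · intro hg; have := hg i0; simpa using this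
    · intro hg i
      by_cases hi : i = i0
      · subst hi; simpa using hg
      · simp [hi]
  rw [hset] at h
  rw [← h]
  rw [show ∏ i, ∑ j ∈ (if i = i0 then ({s'} : Finset S) else Finset.univ), p i j
      = ∏ i, (if i = i0 then p i s' else 1) from Finset.prod_congr rfl (by
        intro i _
        by_cases hi : i = i0 <;> simp [hi, hsum i])]
  simp

omit [DecidableEq S] in
lemma total_prod {ι : Type*} [Fintype ι] [DecidableEq ι]
    (p : ι → S → ℝ) (hsum : ∀ i, ∑ x, p i x = 1) :
    ∑ g : ι → S, ∏ i, p i (g i) = 1 := by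
  have h := Finset.prod_univ_sum (fun _ : ι => (Finset.univ : Finset S)) (fun i j => p i j)
  rw [Fintype.piFinset_univ] at h
  rw [← h]
  simp [hsum]

omit [Fintype S] [DecidableEq S] in
lemma sum_filter_fst {α β : Type*} [Fintype α] [Fintype β]
    (c : α → Prop) [DecidablePred c] (μ : α → ℝ) (W : β → ℝ) :
    ∑ x ∈ Finset.univ.filter (fun x : α × β => c x.1), (μ x.1 * W x.2)
      = (∑ a ∈ Finset.univ.filter c, μ a) * ∑ b, W b := by
  rw [Finset.sum_filter, Fintype.sum_prod_type, Finset.sum_filter, Finset.sum_mul]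
  refine Finset.sum_congr rfl fun a _ => ?_
  by_cases h : c a <;> simp [h, Finset.mul_sum]

omit [Fintype S] [DecidableEq S] in
lemma sum_filter_snd {α β : Type*} [Fintype α] [Fintype β]
    (c : β → Prop) [DecidablePred c] (μ : α → ℝ) (W : β → ℝ) :
    ∑ x ∈ Finset.univ.filter (fun x : α × β => c x.2), (μ x.1 * W x.2)
      = (∑ a, μ a) * ∑ b ∈ Finset.univ.filter c, W b := by
  rw [Finset.sum_filter, Fintype.sum_prod_type, Finset.sum_filter, Finset.sum_mul]
  refine Finset.sum_congr rfl fun a _ => ?_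
  rw [Finset.mul_sum]
  refine Finset.sum_congr rfl fun b _ => ?_
  by_cases h : c b <;> simp [h]

end Helpers

theorem cf_prob_disjoint_max_attained {S A : Type*} [Fintype S] [Fintype A] [DecidableEq S]
    (P : S → S → A → ℝ)
    (hP0 : ∀ s' s a, 0 ≤ P s' s a)
    (hPsum : ∀ s a, ∑ s', P s' s a = 1)
    (st st1 sc sc' : S) (a_t ac : A)
    (hpos : 0 < P st1 st a_t)
    (hdisj : ∀ s' : S, ¬(0 < P s' sc ac ∧ 0 < P s' st a_t))
    (hlt : P sc' sc ac < P st1 st a_t) :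
    (∃ (U : Type) (_ : Fintype U) (f : S → A → U → S) (θ : U → ℝ),
      (∀ u, 0 ≤ θ u) ∧ (∑ u, θ u = 1) ∧
      (∀ s a s', ∑ u ∈ Finset.univ.filter (fun u => f s a u = s'), θ u = P s' s a) ∧
      (∑ u ∈ Finset.univ.filter (fun u => f sc ac u = sc' ∧ f st a_t u = st1), θ u)
          / P st1 st a_t = P sc' sc ac / P st1 st a_t)
    ∧ ∀ (U : Type) [Fintype U], ∀ (f : S → A → U → S) (θ : U → ℝ),
        (∀ u, 0 ≤ θ u) → (∑ u, θ u = 1) →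
        (∀ s a s', ∑ u ∈ Finset.univ.filter (fun u => f s a u = s'), θ u = P s' s a) →
        (∑ u ∈ Finset.univ.filter (fun u => f sc ac u = sc' ∧ f st a_t u = st1), θ u)
            / P st1 st a_t ≤ P sc' sc ac / P st1 st a_t := by
  classical
  constructor
  · -- construction
    have hp00 : (0:ℝ) ≤ P sc' sc ac := hP0 _ _ _
    have hP1le : P st1 st a_t ≤ 1 := by
      rw [← hPsum st a_t]
      exact Finset.single_le_sum (fun i _ => hP0 i st a_t) (Finset.mem_univ st1)
    have hp01 : P sc' sc ac < 1 := lt_of_lt_of_le hlt hP1le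
    have hden : (0:ℝ) < 1 - P sc' sc ac := by linarith
    have hden' : (1:ℝ) - P sc' sc ac ≠ 0 := ne_of_gt hden
    -- coupling μ on S × S
    set a : S → ℝ := fun w => if w = st1 then P sc' sc ac else 0 with hadef
    set q' : S → ℝ := fun w => (P w st a_t - a w) / (1 - P sc' sc ac) with hq'def
    set μ : S → S → ℝ := fun v w => if v = sc' then a w else P v sc ac * q' w with hμdef
    have ha_nonneg : ∀ w, 0 ≤ a w := by
      intro w
      by_cases h : w = st1
      · simp only [hadef, if_pos h]; exact hp00
      · simp only [hadef, if_neg h]; exact le_refl 0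
    have ha_le : ∀ w, a w ≤ P w st a_t := by
      intro w
      by_cases h : w = st1
      · subst h; simp only [hadef, if_pos rfl]; exact le_of_lt hlt
      · simp only [hadef, if_neg h]; exact hP0 _ _ _
    have hq'_nonneg : ∀ w, 0 ≤ q' w := fun w =>
      div_nonneg (by linarith [ha_le w]) (le_of_lt hden)
    have hsuma : ∑ w, a w = P sc' sc ac := by simp [hadef]
    have hsumq' : ∑ w, q' w = 1 := by
      have h1 : ∑ w, (P w st a_t - a w) = 1 - P sc' sc ac := by
        rw [Finset.sum_sub_distrib, hPsum, hsuma]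
      simp only [hq'def]
      rw [← Finset.sum_div, h1, div_self hden']
    have hμ_nonneg : ∀ v w, 0 ≤ μ v w := by
      intro v w
      by_cases h : v = sc'
      · simp only [hμdef, if_pos h]; exact ha_nonneg w
      · simp only [hμdef, if_neg h]; exact mul_nonneg (hP0 _ _ _) (hq'_nonneg w)
    have hμrow : ∀ v, ∑ w, μ v w = P v sc ac := by
      intro v
      by_cases h : v = sc'
      · subst h; simp only [hμdef, if_pos rfl]; rw [hsuma]
      · simp only [hμdef, if_neg h]; rw [← Finset.mul_sum, hsumq', mul_one]
    have hμcol : ∀ w, ∑ v, μ v w = P w st a_t := by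
      intro w
      have step : ∀ v, μ v w
          = P v sc ac * q' w + (if v = sc' then a w - P sc' sc ac * q' w else 0) := by
        intro v
        by_cases h : v = sc'
        · have hv : μ v w = a w := by simp [hμdef, h]
          rw [hv, if_pos h, h]; ring
        · have hv : μ v w = P v sc ac * q' w := by simp [hμdef, h]
          rw [hv]; simp [h]
      rw [Finset.sum_congr rfl (fun v _ => step v), Finset.sum_add_distrib,
        ← Finset.sum_mul, hPsum,
        Finset.sum_ite_eq' Finset.univ sc' (fun _ => a w - P sc' sc ac * q' w)]
      simp only [Finset.mem_univ, if_true, one_mul, hq'def]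
      field_simp
      ring
    have hne : ((sc, ac) : S × A) ≠ (st, a_t) := by
      intro h
      have h1 : sc = st := congrArg Prod.fst h
      have h2 : ac = a_t := congrArg Prod.snd h
      exact hdisj st1 ⟨by rw [h1, h2]; exact hpos, hpos⟩
    set W : ((S × A) → S) → ℝ := fun g => ∏ i : S × A, P (g i) i.1 i.2 with hWdef
    have hW_nonneg : ∀ g, 0 ≤ W g := fun g => Finset.prod_nonneg fun i _ => hP0 _ _ _
    have hWtotal : ∑ g : (S × A) → S, W g = 1 :=
      total_prod (fun i : S × A => fun x => P x i.1 i.2) (fun i => hPsum i.1 i.2)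
    have hWmarg : ∀ (i0 : S × A) (s' : S),
        ∑ g ∈ Finset.univ.filter (fun g : (S × A) → S => g i0 = s'), W g = P s' i0.1 i0.2 :=
      fun i0 s' => prod_marginal (fun i : S × A => fun x => P x i.1 i.2)
        (fun i => hPsum i.1 i.2) i0 s'
    obtain ⟨F, Θ, hΘ0, hΘ1, hΘm, hΘcf⟩ :
        ∃ (F : S → A → ((S × S) × ((S × A) → S)) → S) (Θ : ((S × S) × ((S × A) → S)) → ℝ),
          (∀ u, 0 ≤ Θ u) ∧ (∑ u, Θ u = 1) ∧
          (∀ s b s', ∑ u ∈ Finset.univ.filter (fun u => F s b u = s'), Θ u = P s' s b) ∧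
          (∑ u ∈ Finset.univ.filter (fun u => F sc ac u = sc' ∧ F st a_t u = st1), Θ u
            = P sc' sc ac) := by
      refine ⟨fun s b u => if (s, b) = ((sc, ac) : S × A) then u.1.1
          else if (s, b) = ((st, a_t) : S × A) then u.1.2 else u.2 (s, b),
        fun u => μ u.1.1 u.1.2 * W u.2, ?_, ?_, ?_, ?_⟩
      · intro u; exact mul_nonneg (hμ_nonneg _ _) (hW_nonneg _)
      · rw [Fintype.sum_prod_type]
        have h1 : ∀ vw : S × S, ∑ g : (S × A) → S, μ vw.1 vw.2 * W g = μ vw.1 vw.2 := by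
          intro vw; rw [← Finset.mul_sum, hWtotal, mul_one]
        rw [Finset.sum_congr rfl (fun vw _ => h1 vw), Fintype.sum_prod_type,
          Finset.sum_congr rfl (fun v _ => hμrow v), hPsum]
      · intro s b s'
        by_cases h1 : ((s, b) : S × A) = (sc, ac)
        · rw [Finset.filter_congr (q := fun u : (S × S) × ((S × A) → S) => u.1.1 = s')
            (fun u _ => by simp [h1])]
          rw [show (Finset.univ.filter (fun u : (S × S) × ((S × A) → S) => u.1.1 = s'))
              = Finset.univ.filter (fun u : (S × S) × ((S × A) → S) =>
                  (fun x : S × S => x.1 = s') u.1) from rfl]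
          rw [sum_filter_fst (fun x : S × S => x.1 = s') (fun x : S × S => μ x.1 x.2) W]
          rw [hWtotal, mul_one, Finset.sum_filter, Fintype.sum_prod_type]
          have h1' : s = sc := congrArg Prod.fst h1
          have h2' : b = ac := congrArg Prod.snd h1
          subst h1'; subst h2'
          have h3 : ∀ v : S, (∑ w : S, if v = s' then μ v w else 0)
              = if v = s' then ∑ w, μ v w else 0 := by
            intro v; by_cases h : v = s' <;> simp [h]
          rw [Finset.sum_congr rfl (fun v _ => h3 v),
            Finset.sum_ite_eq' Finset.univ s' (fun v => ∑ w, μ v w)]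
          simp only [Finset.mem_univ, if_true]
          exact hμrow s'
        · by_cases h2 : ((s, b) : S × A) = (st, a_t)
          · have hne2 : ¬(st = sc ∧ a_t = ac) := fun ⟨x, y⟩ => hne (by rw [x, y])
            rw [Finset.filter_congr (q := fun u : (S × S) × ((S × A) → S) => u.1.2 = s')
              (fun u _ => by simp [h1, h2, hne2])]
            rw [show (Finset.univ.filter (fun u : (S × S) × ((S × A) → S) => u.1.2 = s'))
                = Finset.univ.filter (fun u : (S × S) × ((S × A) → S) =>
                    (fun x : S × S => x.2 = s') u.1) from rfl]
            rw [sum_filter_fst (fun x : S × S => x.2 = s') (fun x : S × S => μ x.1 x.2) W]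
            rw [hWtotal, mul_one, Finset.sum_filter, Fintype.sum_prod_type]
            have h1' : s = st := congrArg Prod.fst h2
            have h2' : b = a_t := congrArg Prod.snd h2
            subst h1'; subst h2'
            have h3 : ∀ v : S, (∑ w : S, if w = s' then μ v w else 0) = μ v s' := by
              intro v
              rw [Finset.sum_ite_eq' Finset.univ s' (fun w => μ v w)]
              simp
            rw [Finset.sum_congr rfl (fun v _ => h3 v)]
            exact hμcol s'
          · rw [Finset.filter_congr
              (q := fun u : (S × S) × ((S × A) → S) => u.2 (s, b) = s')
              (fun u _ => by simp [h1, h2])]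
            rw [show (Finset.univ.filter (fun u : (S × S) × ((S × A) → S) => u.2 (s, b) = s'))
                = Finset.univ.filter (fun u : (S × S) × ((S × A) → S) =>
                    (fun g : (S × A) → S => g (s, b) = s') u.2) from rfl]
            rw [sum_filter_snd (fun g : (S × A) → S => g (s, b) = s')
              (fun x : S × S => μ x.1 x.2) W]
            rw [Fintype.sum_prod_type,
              Finset.sum_congr rfl (fun v _ => hμrow v), hPsum, one_mul]
            exact hWmarg (s, b) s'
      · rw [Finset.filter_congr
          (q := fun u : (S × S) × ((S × A) → S) => u.1.1 = sc' ∧ u.1.2 = st1)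
          (fun u _ => by simp [Ne.symm hne])]
        rw [show (Finset.univ.filter
              (fun u : (S × S) × ((S × A) → S) => u.1.1 = sc' ∧ u.1.2 = st1))
            = Finset.univ.filter (fun u : (S × S) × ((S × A) → S) =>
                (fun x : S × S => x.1 = sc' ∧ x.2 = st1) u.1) from rfl]
        rw [sum_filter_fst (fun x : S × S => x.1 = sc' ∧ x.2 = st1)
          (fun x : S × S => μ x.1 x.2) W]
        rw [hWtotal, mul_one, Finset.sum_filter, Fintype.sum_prod_type]
        have h3 : ∀ v : S, (∑ w : S, if v = sc' ∧ w = st1 then μ v w else 0)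
            = if v = sc' then μ v st1 else 0 := by
          intro v; by_cases h : v = sc' <;> simp [h]
        rw [Finset.sum_congr rfl (fun v _ => h3 v),
          Finset.sum_ite_eq' Finset.univ sc' (fun v => μ v st1)]
        simp only [Finset.mem_univ, if_true, hμdef, hadef, if_pos rfl]
    -- transport to Type 0
    have e : Fin (Fintype.card ((S × S) × ((S × A) → S))) ≃ ((S × S) × ((S × A) → S)) :=
      (Fintype.equivFin _).symm
    refine ⟨Fin (Fintype.card ((S × S) × ((S × A) → S))), inferInstance,
      fun s b u => F s b (e u),
      fun u => Θ (e u), fun u => hΘ0 (e u), ?_, ?_, ?_⟩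
    · rw [← hΘ1]; exact Fintype.sum_equiv e _ _ (fun u => rfl)
    · intro s b s'
      rw [← hΘm s b s', Finset.sum_filter, Finset.sum_filter]
      exact Fintype.sum_equiv e _ _ (fun u => rfl)
    · rw [div_eq_div_iff (ne_of_gt hpos) (ne_of_gt hpos), ← hΘcf,
        Finset.sum_filter, Finset.sum_filter]
      congr 1
      exact Fintype.sum_equiv e _ _ (fun u => rfl)
  · -- maximality
    intro U _ f θ h0 hsum1 hmarg
    have key : (∑ u ∈ Finset.univ.filter (fun u => f sc ac u = sc' ∧ f st a_t u = st1), θ u)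
        ≤ P sc' sc ac := by
      rw [← hmarg sc ac sc']
      apply Finset.sum_le_sum_of_subset_of_nonneg
      · intro u hu
        rw [Finset.mem_filter] at hu ⊢
        exact ⟨hu.1, hu.2.1⟩
      · intro u _ _; exact h0 u
    gcongr
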